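/- Let θ > 0 be real and p ≥ 1 an integer. Then ∑_{k=0}^{p−1} [ (1−p)_k · (−p(1+θ))_k / ( (2 − p(1+θ))_k · k! ) ] · ((1+θ)/θ)^k = (−1)^{p−1} · (p(1+θ) − 1) / θ^p, where (a)_k := ∏_{i=0}^{k−1} (a + i) denotes the rising factorial (Pochhammer symbol) of a real number a. (Note that 2 − p(1+θ) + i < 0 for all 0 ≤ i ≤ p−2, so all denominators are nonzero.) -/

import Mathlib

/-- The rising factorial (Pochhammer symbol) `(a)_k = a(a+1)⋯(a+k-1)` of a real number. -/
noncomputable def risingFac (a : ℝ) (k : ℕ) : ℝ := ∏ i ∈ Finset.range k, (a + i)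

lemma risingFac_succ (a : ℝ) (k : ℕ) : risingFac a (k+1) = risingFac a k * (a + k) :=
  Finset.prod_range_succ _ _

lemma risingFac_zero (a : ℝ) : risingFac a 0 = 1 := by simp [risingFac]

/-- `(-n)_k = (-1)^k k! C(n,k)` for `k ≤ n`. -/
lemma aux1 (n : ℕ) : ∀ k, k ≤ n →
    risingFac (-(n:ℝ)) k = (-1)^k * (Nat.factorial k : ℝ) * (n.choose k : ℝ) := by
  intro k
  induction k with
  | zero => intro _; simp [risingFac_zero]
  | succ k ih =>
    intro hk
    have hk' : k ≤ n := by omega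
    rw [risingFac_succ, ih hk']
    have h1 : (n.choose (k+1)) * (k+1) = n.choose k * (n - k) := Nat.choose_succ_right_eq n k
    have h3 : ((n.choose (k+1) : ℝ)) * ((k:ℝ)+1) = (n.choose k : ℝ) * ((n:ℝ) - k) := by
      have h2 : ((n - k : ℕ) : ℝ) = (n:ℝ) - (k:ℝ) := by
        have := Nat.cast_sub hk' (R := ℝ); linarith [this]
      have := congrArg (Nat.cast : ℕ → ℝ) h1
      push_cast at this
      rw [this, h2]
    rw [Nat.factorial_succ]
    push_cast
    linear_combination ((-1:ℝ)^k * (Nat.factorial k : ℝ)) * h3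

/-- telescoping product identity `(2-c)_k ⬝ c(c-1) = (-c)_k ⬝ (c-k)(c-k-1)`. -/
lemma aux2 (c : ℝ) : ∀ k : ℕ, risingFac (2-c) k * (c*(c-1)) = risingFac (-c) k * ((c-k)*(c-k-1)) := by
  intro k
  induction k with
  | zero => norm_num [risingFac_zero]
  | succ k ih =>
    rw [risingFac_succ, risingFac_succ]
    push_cast
    linear_combination (2 - c + (k:ℝ)) * ih

lemma aux3 (a : ℝ) (k : ℕ) (h : ∀ i : ℕ, i < k → a + (i:ℝ) ≠ 0) : risingFac a k ≠ 0 :=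
  Finset.prod_ne_zero_iff.mpr (fun i hi => h i (Finset.mem_range.mp hi))

/-- evaluation of the terminating Gauss hypergeometric sum
`₂F₁(1−p, −p(1+θ); 2−p(1+θ); (1+θ)/θ)`. -/
theorem stmt_11 (θ : ℝ) (hθ : 0 < θ) (p : ℕ) (hp : 1 ≤ p) :
    ∑ k ∈ Finset.range p,
        risingFac (1 - p) k * risingFac (-(p : ℝ) * (1 + θ)) k /
          (risingFac (2 - p * (1 + θ)) k * (Nat.factorial k : ℝ)) * ((1 + θ) / θ) ^ k
      = (-1 : ℝ) ^ (p - 1) * ((p : ℝ) * (1 + θ) - 1) / θ ^ p := by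
  obtain ⟨n, rfl⟩ : ∃ n, p = n + 1 := ⟨p - 1, by omega⟩
  push_cast
  have hθ' : θ ≠ 0 := ne_of_gt hθ
  have h1θ : (0:ℝ) < 1 + θ := by linarith
  set g : ℕ → ℝ := fun k => (n.choose k : ℝ) * (-((1 + θ)/θ))^k with hg_def
  set u : ℕ → ℝ := fun j => 1/(((n:ℝ)+1)*(1+θ) - (j:ℝ)) with hu_def
  have hcj : ∀ j : ℕ, j ≤ n + 1 → 0 < ((n:ℝ)+1)*(1+θ) - (j:ℝ) := by
    intro j hj
    have hj' : (j:ℝ) ≤ (n:ℝ) + 1 := by exact_mod_cast hj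
    have hmul : (0:ℝ) < ((n:ℝ)+1) * θ := by positivity
    nlinarith
  have hc0 : ((n:ℝ)+1)*(1+θ) ≠ 0 := by positivity
  have hxj : ∀ j : ℕ, (-((1 + θ)/θ))^j * θ^j = (-(1+θ))^j := by
    intro j
    rw [← mul_pow]
    congr 1
    field_simp
  -- Step 1: rewrite each term
  have step1 : ∀ k ∈ Finset.range (n+1),
      risingFac (1 - ((n:ℝ) + 1)) k * risingFac (-((n:ℝ) + 1) * (1 + θ)) k /
          (risingFac (2 - ((n:ℝ) + 1) * (1 + θ)) k * (Nat.factorial k : ℝ)) * ((1 + θ) / θ) ^ k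
        = (((n:ℝ)+1)*(1+θ)) * ((((n:ℝ)+1)*(1+θ)) - 1) * (g k * (u (k+1) - u k)) := by
    intro k hk
    have hkn : k ≤ n := by simpa [Nat.lt_succ_iff] using Finset.mem_range.mp hk
    set c : ℝ := ((n:ℝ)+1)*(1+θ) with hc_def
    have e1 : (1 : ℝ) - ((n:ℝ)+1) = -(n:ℝ) := by ring
    have e2 : -((n:ℝ)+1) * (1 + θ) = -c := by rw [hc_def]; ring
    rw [e1, e2, aux1 n k hkn]
    have hrne : risingFac (2-c) k ≠ 0 := by
      apply aux3
      intro i hi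
      have hi' : (i:ℝ) ≤ (n:ℝ) - 1 := by
        have h4 : i ≤ n - 1 := by omega
        have h2 : ((i:ℕ):ℝ) ≤ ((n-1:ℕ):ℝ) := by exact_mod_cast h4
        have h3 : ((n-1:ℕ):ℝ) = (n:ℝ) - 1 := by
          have hn1 : 1 ≤ n := by omega
          have := Nat.cast_sub hn1 (R := ℝ); simpa using this
        linarith [h2, h3.le, h3.ge]
      have : (2:ℝ) - c + i < 0 := by
        rw [hc_def]; nlinarith
      linarith
    have hck : c - (k:ℝ) ≠ 0 := ne_of_gt (hcj k (by omega))
    have hck1 : c - ((k:ℝ)+1) ≠ 0 := by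
      have := hcj (k+1) (by omega); push_cast at this; intro h; linarith [this]
    have hck1' : c - (k:ℝ) - 1 ≠ 0 := by intro h; apply hck1; linarith
    have hfk : (Nat.factorial k : ℝ) ≠ 0 := by positivity
    have hprod : (c - (k:ℝ)) * (c - (k:ℝ) - 1) ≠ 0 := mul_ne_zero hck hck1'
    have hratio : risingFac (-c) k
        = risingFac (2-c) k * (c*(c-1)) / ((c - (k:ℝ))*(c - (k:ℝ) - 1)) := by
      rw [eq_div_iff hprod]
      linear_combination (aux2 c k).symm
    have hu1 : u (k+1) = 1/(c - ((k:ℝ)+1)) := by rw [hu_def, hc_def]; push_cast; ring_nf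
    have hu0 : u k = 1/(c - (k:ℝ)) := by rw [hu_def, hc_def]
    have hnx : (-((1 + θ)/θ))^k = (-1)^k * ((1 + θ)/θ)^k := by
      rw [← neg_one_mul, mul_pow]
    rw [hu1, hu0, hg_def]
    simp only []
    rw [hratio, hnx]
    generalize hR : risingFac (2-c) k = R at hrne ⊢
    generalize ht : ((1+θ)/θ)^k = t
    field_simp
    ring
  rw [Finset.sum_congr rfl step1, ← Finset.mul_sum]
  -- Step 2: telescoping
  have hsplit : ∑ k ∈ Finset.range (n+1), g k * (u (k+1) - u k)
      = (∑ k ∈ Finset.range (n+1), g k * u (k+1)) - ∑ k ∈ Finset.range (n+1), g k * u k := by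
    rw [← Finset.sum_sub_distrib]; congr 1; ext k; ring
  set F : ℕ → ℝ := fun j => if j = 0 then 0 else g (j-1) * u j with hF_def
  have hshift : ∑ k ∈ Finset.range (n+1), g k * u (k+1) = ∑ j ∈ Finset.range (n+2), F j := by
    rw [Finset.sum_range_succ' F (n+1)]
    simp [hF_def]
  have hgtop : g (n+1) = 0 := by
    simp [hg_def, Nat.choose_succ_self]
  have hext : ∑ k ∈ Finset.range (n+1), g k * u k = ∑ j ∈ Finset.range (n+2), g j * u j := by
    conv_rhs => rw [Finset.sum_range_succ]
    rw [hgtop]; ring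
  rw [hsplit, hshift, hext, ← Finset.sum_sub_distrib]
  -- Step 3: per-index closed form
  have step3 : ∀ j ∈ Finset.range (n+2),
      F j - g j * u j
        = -(1/(((n:ℝ)+1)*(1+θ))) * (((n+1).choose j : ℝ) * (-((1 + θ)/θ))^j) := by
    intro j hj
    have hjn : j ≤ n + 1 := by simpa [Nat.lt_succ_iff] using Finset.mem_range.mp hj
    match j with
    | 0 =>
      simp only [hF_def, hg_def, hu_def]
      norm_num
    | (m+1) =>
      have hmn : m ≤ n := by omega
      have hA : ((n:ℝ)+1) * (n.choose m : ℝ) = ((m:ℝ)+1) * ((n+1).choose (m+1) : ℝ) := by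
        have h0 := Nat.add_one_mul_choose_eq n m
        have h1 := congrArg (Nat.cast : ℕ → ℝ) h0
        push_cast at h1
        linarith [h1]
      have hB : ((n:ℝ)+1) * (n.choose (m+1) : ℝ) = ((n:ℝ) - m) * ((n+1).choose (m+1) : ℝ) := by
        have hp2 : (n+1).choose (m+1) = n.choose m + n.choose (m+1) := Nat.choose_succ_succ n m
        have hp' : ((n+1).choose (m+1) : ℝ) = (n.choose m : ℝ) + (n.choose (m+1) : ℝ) := by
          exact_mod_cast congrArg (Nat.cast : ℕ → ℝ) hp2
        linear_combination (-1 : ℝ) * hA - ((n:ℝ)+1) * hp' 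
      set c : ℝ := ((n:ℝ)+1)*(1+θ) with hc_def
      have hck1 : c - ((m:ℝ)+1) ≠ 0 := by
        have := hcj (m+1) (by omega); push_cast at this; intro h; linarith [this]
      have hF1 : F (m+1) = g m * u (m+1) := by simp [hF_def]
      have hu1 : u (m+1) = 1/(c - ((m:ℝ)+1)) := by rw [hu_def, hc_def]; push_cast; ring_nf
      have hpoly : (((n.choose m : ℝ)) * θ + ((n.choose (m+1)):ℝ) * (1+θ)) * (((n:ℝ)+1)*(1+θ))
          = ((((n:ℝ)+1)*(1+θ)) - ((m:ℝ)+1)) * (((n+1).choose (m+1)) : ℝ) * (1+θ) := by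
        linear_combination (θ*(1+θ)) * hA + ((1+θ)^2) * hB
      have hθm : (θ:ℝ)^(m+1) ≠ 0 := pow_ne_zero _ hθ'
      have hgoal : (g m - g (m+1)) * c * θ^(m+1)
          = -(((n+1).choose (m+1):ℝ)) * (-(1+θ))^(m+1) * (c - ((m:ℝ)+1)) := by
        have e1 := hxj m
        have e2 := hxj (m+1)
        rw [hg_def]
        simp only []
        rw [hc_def]
        push_cast
        linear_combination ((n.choose m:ℝ)*(((n:ℝ)+1)*(1+θ))*θ) * e1
          - ((n.choose (m+1):ℝ)*(((n:ℝ)+1)*(1+θ))) * e2 + ((-(1+θ))^m) * hpoly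
      have hgoal2 : (g m - g (m+1)) * c
          = -(((n+1).choose (m+1)):ℝ) * (-((1 + θ)/θ))^(m+1) * (c - ((m:ℝ)+1)) := by
        have h := hgoal
        rw [← hxj (m+1)] at h
        apply mul_right_cancel₀ hθm
        linear_combination h
      have hfin : F (m+1) - g (m+1) * u (m+1) = (g m - g (m+1)) * (1/(c - ((m:ℝ)+1))) := by
        rw [hF1, hu1]; ring
      rw [hfin]
      generalize hy : (-((1 + θ)/θ))^(m+1) = y at hgoal2 ⊢
      have hcne : c ≠ 0 := by rw [hc_def]; positivity
      field_simp
      linear_combination hgoal2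
  rw [Finset.sum_congr rfl step3, ← Finset.mul_sum]
  -- Step 4: binomial theorem
  have hbin : (∑ j ∈ Finset.range (n+2), ((n+1).choose j : ℝ) * (-((1 + θ)/θ))^j)
      = (-((1 + θ)/θ) + 1)^(n+1) := by
    rw [add_pow]
    apply Finset.sum_congr rfl
    intro j hj
    rw [one_pow]
    ring
  rw [hbin]
  have hxval : (-((1 + θ)/θ) + 1) = (-1)/θ := by
    field_simp
    ring
  rw [hxval, div_pow]
  rw [pow_succ]
  have hθn : θ^n ≠ 0 := pow_ne_zero _ hθ'
  field_simp
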